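/- Let $Y_0, Y_1, \dots, Y_{[J/2]}$ be i.i.d. real random variables with mean zero, $|Y_j| \leq M$ almost surely, and $E[Y_j^2] \leq 2 b^2$ where $b > 0$. Let $n, q, k \in \mathbb{N}$ with $J+1 = n/q \geq 1$, and suppose $M \leq 2\sqrt{q}\,\frac{\sqrt{n}}{q\sqrt{2^k}} b$. Then for every $u \geq 1$, $P\left( \sqrt{\tfrac{q}{n}} \sum_{j=0}^{[J/2]} Y_j \geq u^2\, 2^{k/2}\, b\, \tfrac{16}{3} \right) \leq \exp\left( -u^2 2^k \right)$. -/

import Mathlib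

open MeasureTheory ProbabilityTheory

lemma exp_le_quadratic {x : ℝ} (hx : |x| ≤ 1) : Real.exp x ≤ 1 + x + x ^ 2 := by
  have h := Real.exp_bound hx (n := 2) (by norm_num)
  have h2 : (∑ m ∈ Finset.range 2, x ^ m / m.factorial) = 1 + x := by
    simp [Finset.sum_range_succ]
  rw [h2] at h
  have h3 := (abs_sub_le_iff.1 h).1
  have hx2 : |x| ^ 2 = x ^ 2 := sq_abs x
  norm_num at h3
  nlinarith [sq_nonneg x]

lemma mgf_le_of_bdd {Ω : Type*} [MeasurableSpace Ω] (P : Measure Ω) [IsProbabilityMeasure P]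
    (Y : Ω → ℝ) (hmeas : Measurable Y) (M b t : ℝ) (hb : 0 < b) (ht0 : 0 < t)
    (hmean : ∫ ω, Y ω ∂P = 0)
    (hbound : ∀ᵐ ω ∂P, |Y ω| ≤ M)
    (hvar : ∫ ω, (Y ω) ^ 2 ∂P ≤ 2 * b ^ 2)
    (htM : t * M ≤ 3/5) :
    mgf Y P t ≤ Real.exp (2 * t ^ 2 * b ^ 2) := by
  have hYint : Integrable Y P := by
    refine (integrable_const M).mono' hmeas.aestronglyMeasurable ?_
    exact hbound.mono fun ω h => by simpa using h
  have hY2int : Integrable (fun ω => (Y ω) ^ 2) P := by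
    refine (integrable_const (M ^ 2)).mono' (hmeas.pow_const 2).aestronglyMeasurable ?_
    exact hbound.mono fun ω h => by
      rw [Real.norm_eq_abs, abs_pow, ← sq_abs M]
      exact pow_le_pow_left₀ (abs_nonneg _) (h.trans (le_abs_self M)) 2
  have hquad : ∀ᵐ ω ∂P, Real.exp (t * Y ω) ≤ 1 + t * Y ω + t ^ 2 * (Y ω) ^ 2 := by
    refine hbound.mono fun ω h => ?_
    have habs : |t * Y ω| ≤ 1 := by
      rw [abs_mul, abs_of_pos ht0]
      calc t * |Y ω| ≤ t * M := by gcongr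
        _ ≤ 1 := htM.trans (by norm_num)
    calc Real.exp (t * Y ω) ≤ 1 + t * Y ω + (t * Y ω) ^ 2 := exp_le_quadratic habs
      _ = 1 + t * Y ω + t ^ 2 * (Y ω) ^ 2 := by ring
  have hint : Integrable (fun ω => 1 + t * Y ω + t ^ 2 * (Y ω) ^ 2) P :=
    ((integrable_const 1).add (hYint.const_mul t)).add (hY2int.const_mul (t ^ 2))
  have h1 : mgf Y P t ≤ ∫ ω, (1 + t * Y ω + t ^ 2 * (Y ω) ^ 2) ∂P := by
    refine integral_mono_ae ?_ hint hquad
    refine (integrable_const (Real.exp (t * M))).mono'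
      (Real.measurable_exp.comp (hmeas.const_mul t)).aestronglyMeasurable ?_
    refine hbound.mono fun ω h => ?_
    rw [Real.norm_eq_abs, abs_of_pos (Real.exp_pos _), Real.exp_le_exp]
    calc t * Y ω ≤ t * |Y ω| := by gcongr; exact le_abs_self _
      _ ≤ t * M := by gcongr
  have ha : Integrable (fun ω => 1 + t * Y ω) P := by
    exact (integrable_const 1).add (hYint.const_mul t)
  have h2 : ∫ ω, (1 + t * Y ω + t ^ 2 * (Y ω) ^ 2) ∂P = 1 + t ^ 2 * ∫ ω, (Y ω) ^ 2 ∂P := by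
    have e1 : ∫ ω, (1 + t * Y ω + t ^ 2 * (Y ω) ^ 2) ∂P
        = (∫ ω, (1 + t * Y ω) ∂P) + ∫ ω, t ^ 2 * (Y ω) ^ 2 ∂P :=
      integral_add ha (hY2int.const_mul _)
    have e2 : ∫ ω, (1 + t * Y ω) ∂P = (∫ ω, (1:ℝ) ∂P) + ∫ ω, t * Y ω ∂P :=
      integral_add (integrable_const 1) (hYint.const_mul _)
    rw [e1, e2, integral_const_mul, integral_const_mul, hmean, integral_const]
    simp
  calc mgf Y P t ≤ 1 + t ^ 2 * ∫ ω, (Y ω) ^ 2 ∂P := h1.trans_eq h2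
    _ ≤ 1 + 2 * t ^ 2 * b ^ 2 := by nlinarith [sq_nonneg t]
    _ ≤ Real.exp (2 * t ^ 2 * b ^ 2) := by
        have := Real.add_one_le_exp (2 * t ^ 2 * b ^ 2); linarith

/-- Single-block Bernstein-type bound: for i.i.d. mean-zero `Y_0,…,Y_{⌊J/2⌋}` bounded by `M`
with second moment at most `2b²`, where `n = (J+1)q` and
`M ≤ 2√q · (√n / (q √(2^k))) · b`, one has for every `u ≥ 1`
`P(√(q/n) ∑_j Y_j ≥ u² 2^{k/2} b · 16/3) ≤ exp(-u² 2^k)`. -/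
theorem stmt_9 {Ω : Type*} [MeasurableSpace Ω] (P : Measure Ω) [IsProbabilityMeasure P]
    (n q k J : ℕ) (hq : 0 < q) (hnq : n = (J + 1) * q)
    (Y : Fin (J / 2 + 1) → Ω → ℝ) (hmeas : ∀ j, Measurable (Y j))
    (hindep : iIndepFun Y P)
    (hident : ∀ j, Measure.map (Y j) P = Measure.map (Y 0) P)
    (M b : ℝ) (hb : 0 < b)
    (hmean : ∀ j, ∫ ω, Y j ω ∂P = 0)
    (hbound : ∀ j, ∀ᵐ ω ∂P, |Y j ω| ≤ M)
    (hvar : ∀ j, ∫ ω, (Y j ω) ^ 2 ∂P ≤ 2 * b ^ 2)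
    (hM : M ≤ 2 * Real.sqrt q * (Real.sqrt n / (q * Real.sqrt (2 ^ k))) * b) :
    ∀ u : ℝ, 1 ≤ u →
      (P {ω | u ^ 2 * (2:ℝ) ^ ((k : ℝ) / 2) * b * (16 / 3) ≤
          Real.sqrt ((q : ℝ) / n) * ∑ j, Y j ω}).toReal ≤
        Real.exp (-(u ^ 2 * 2 ^ k)) := by
  intro u hu
  have hq' : (0:ℝ) < q := by exact_mod_cast hq
  have hn : 0 < n := by rw [hnq]; positivity
  have hn' : (0:ℝ) < n := by exact_mod_cast hn
  set K : ℝ := Real.sqrt (2 ^ k) with hK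
  have hK0 : 0 < K := Real.sqrt_pos.2 (by positivity)
  have hK2 : K ^ 2 = 2 ^ k := Real.sq_sqrt (by positivity)
  set r : ℝ := Real.sqrt ((q:ℝ) / n) with hr
  have hr0 : 0 < r := Real.sqrt_pos.2 (by positivity)
  have hr2 : r ^ 2 = (q:ℝ) / n := Real.sq_sqrt (by positivity)
  set t : ℝ := (3/10) * K * r / b with ht
  have ht0 : 0 < t := by positivity
  have hrq : r = Real.sqrt q / Real.sqrt n := by
    rw [hr, Real.sqrt_div' q (by positivity)]
  have hsq0 : (0:ℝ) < Real.sqrt q := Real.sqrt_pos.2 hq'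
  have hsn0 : (0:ℝ) < Real.sqrt n := Real.sqrt_pos.2 hn'
  have htM : t * M ≤ 3/5 := by
    have h1 : t * M ≤ t * (2 * Real.sqrt q * (Real.sqrt n / ((q:ℝ) * K)) * b) := by
      exact mul_le_mul_of_nonneg_left hM ht0.le
    refine h1.trans_eq ?_
    have hq2 : (q:ℝ) = Real.sqrt q ^ 2 := (Real.sq_sqrt hq'.le).symm
    rw [ht, hrq, hq2]
    field_simp
    linear_combination 10 * Real.sq_sqrt (sq_nonneg (Real.sqrt q))
  have hKrpow : (2:ℝ) ^ ((k:ℝ)/2) = K := by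
    rw [hK, Real.sqrt_eq_rpow, ← Real.rpow_natCast 2 k,
      ← Real.rpow_mul (by norm_num : (0:ℝ) ≤ 2)]
    congr 1
    ring
  have hmgf : ∀ j, mgf (Y j) P t ≤ Real.exp (2 * t ^ 2 * b ^ 2) := fun j =>
    mgf_le_of_bdd P (Y j) (hmeas j) M b t hb ht0 (hmean j) (hbound j) (hvar j) htM
  have hint_exp : ∀ j, Integrable (fun ω => Real.exp (t * Y j ω)) P := by
    intro j
    refine (integrable_const (Real.exp (t * M))).mono'
      (Real.measurable_exp.comp ((hmeas j).const_mul t)).aestronglyMeasurable ?_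
    refine (hbound j).mono fun ω h => ?_
    rw [Real.norm_eq_abs, abs_of_pos (Real.exp_pos _), Real.exp_le_exp]
    calc t * Y j ω ≤ t * |Y j ω| := by gcongr; exact le_abs_self _
      _ ≤ t * M := by gcongr
  have hint_sum : Integrable (fun ω => Real.exp (t * (∑ j, Y j) ω)) P :=
    hindep.integrable_exp_mul_sum hmeas (fun i _ => hint_exp i)
  have hmgf_sum : mgf (∑ j, Y j) P t ≤ Real.exp (((J/2+1:ℕ):ℝ) * (2 * t ^ 2 * b ^ 2)) := by
    rw [hindep.mgf_sum hmeas]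
    calc ∏ j, mgf (Y j) P t ≤ ∏ _j : Fin (J/2+1), Real.exp (2 * t ^ 2 * b ^ 2) :=
          Finset.prod_le_prod (fun j _ => mgf_nonneg) (fun j _ => hmgf j)
      _ = Real.exp (((J/2+1:ℕ):ℝ) * (2 * t ^ 2 * b ^ 2)) := by
          rw [Finset.prod_const, Finset.card_univ, Fintype.card_fin, ← Real.exp_nat_mul]
  set c : ℝ := u ^ 2 * K * b * (16/3) with hc
  have hset : {ω | u ^ 2 * (2:ℝ) ^ ((k : ℝ) / 2) * b * (16 / 3) ≤ r * ∑ j, Y j ω}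
      = {ω | c / r ≤ (∑ j, Y j) ω} := by
    ext ω
    simp only [Set.mem_setOf_eq, Finset.sum_apply, hKrpow, hc]
    rw [div_le_iff₀ hr0, mul_comm r]
  have hch := measure_ge_le_exp_mul_mgf (μ := P) (X := ∑ j, Y j) (c / r) ht0.le hint_sum
  rw [hset]
  refine hch.trans ?_
  have htc : t * (c / r) = (8/5) * u ^ 2 * 2 ^ k := by
    have h1 : t * (c / r) = (8/5) * u ^ 2 * K ^ 2 := by
      rw [ht, hc]; field_simp; ring
    rw [h1, hK2]
  have ht2 : 2 * t ^ 2 * b ^ 2 = (9/50) * 2 ^ k * ((q:ℝ) / n) := by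
    have h1 : 2 * t ^ 2 * b ^ 2 = (9/50) * K ^ 2 * r ^ 2 := by
      rw [ht]; field_simp; ring
    rw [h1, hK2, hr2]
  have hNle : ((J/2+1:ℕ):ℝ) ≤ (J:ℝ) + 1 := by
    exact_mod_cast Nat.succ_le_succ (Nat.div_le_self J 2)
  have hqn1 : ((J:ℝ) + 1) * ((q:ℝ) / n) = 1 := by
    have hn2 : (n:ℝ) = ((J:ℝ) + 1) * (q:ℝ) := by exact_mod_cast hnq
    rw [hn2]
    field_simp
  have hsum_le : ((J/2+1:ℕ):ℝ) * (2 * t ^ 2 * b ^ 2) ≤ (9/50) * 2 ^ k := by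
    rw [ht2]
    calc ((J/2+1:ℕ):ℝ) * ((9/50) * 2 ^ k * ((q:ℝ) / n))
        ≤ ((J:ℝ) + 1) * ((9/50) * 2 ^ k * ((q:ℝ) / n)) := by
          exact mul_le_mul_of_nonneg_right hNle (by positivity)
      _ = (9/50) * 2 ^ k * (((J:ℝ) + 1) * ((q:ℝ) / n)) := by ring
      _ = (9/50) * 2 ^ k := by rw [hqn1]; ring
  calc Real.exp (-t * (c / r)) * mgf (∑ j, Y j) P t
      ≤ Real.exp (-t * (c / r)) * Real.exp (((J/2+1:ℕ):ℝ) * (2 * t ^ 2 * b ^ 2)) :=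
        mul_le_mul_of_nonneg_left hmgf_sum (Real.exp_pos _).le
    _ = Real.exp (-t * (c / r) + ((J/2+1:ℕ):ℝ) * (2 * t ^ 2 * b ^ 2)) :=
        (Real.exp_add _ _).symm
    _ ≤ Real.exp (-(u ^ 2 * 2 ^ k)) := by
        rw [Real.exp_le_exp, neg_mul, htc]
        have hu2 : 1 ≤ u ^ 2 := one_le_pow₀ hu
        have h2k : (0:ℝ) < 2 ^ k := by positivity
        nlinarith
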